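/- If (Δ, E) is a comonoid in the category of finite-dimensional Hilbert spaces and CP maps which is isometric (Δ† ∘ Δ = id, with Δ† the Hilbert–Schmidt adjoint) and satisfies the snake equations ((Δ† ⊗ id) ∘ (id ⊗ Δ) = id = (id ⊗ Δ†) ∘ (Δ ⊗ id)), then both Δ and E are pure CP maps, i.e. Δ(ρ) = δ ρ δ† and E(ρ) = ε ρ ε† for single linear maps δ : H → H ⊗ H and ε : H → ℂ. -/

import Mathlib

open Matrix Kronecker BigOperators

/-- Kraus operator of `(Δ ⊗ id) ∘ Δ` from Kraus operators `A, B` of `Δ`. -/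
noncomputable def coassocL {h : Type*} [Fintype h] [DecidableEq h]
    (A B : Matrix (h × h) h ℂ) : Matrix ((h × h) × h) h ℂ :=
  (A ⊗ₖ (1 : Matrix h h ℂ)) * B

/-- Kraus operator of `(id ⊗ Δ) ∘ Δ`, reassociated to `(H ⊗ H) ⊗ H`. -/
noncomputable def coassocR {h : Type*} [Fintype h] [DecidableEq h]
    (A B : Matrix (h × h) h ℂ) : Matrix ((h × h) × h) h ℂ :=
  Matrix.reindex (Equiv.prodAssoc h h h).symm (Equiv.refl h)
    (((1 : Matrix h h ℂ) ⊗ₖ A) * B)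

/-- Kraus operator of the left snake composite `(Δ† ⊗ id) ∘ (id ⊗ Δ)`. -/
noncomputable def snakeL {h : Type*} [Fintype h] [DecidableEq h]
    (A B : Matrix (h × h) h ℂ) : Matrix (h × h) (h × h) ℂ :=
  (Aᴴ ⊗ₖ (1 : Matrix h h ℂ)) *
    Matrix.reindex (Equiv.prodAssoc h h h).symm (Equiv.refl (h × h))
      ((1 : Matrix h h ℂ) ⊗ₖ B)

/-- Kraus operator of the right snake composite `(id ⊗ Δ†) ∘ (Δ ⊗ id)`. -/
noncomputable def snakeR {h : Type*} [Fintype h] [DecidableEq h]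
    (A B : Matrix (h × h) h ℂ) : Matrix (h × h) (h × h) ℂ :=
  ((1 : Matrix h h ℂ) ⊗ₖ Aᴴ) *
    Matrix.reindex (Equiv.prodAssoc h h h) (Equiv.refl (h × h))
      (B ⊗ₖ (1 : Matrix h h ℂ))

lemma sandwich_apply {α β : Type*} [Fintype β] (A : Matrix α β ℂ) (ρ : Matrix β β ℂ) (x y : α) :
    (A * ρ * Aᴴ) x y = ∑ u, ∑ v, A x u * ρ u v * star (A y v) := by
  simp only [Matrix.mul_apply, Matrix.conjTranspose_apply, Finset.sum_mul]
  rw [Finset.sum_comm]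

lemma kraus_entry {N ι : Type*} [Fintype N] [DecidableEq N] [Fintype ι]
    (K : ι → Matrix N N ℂ) (hK : ∀ ρ, ∑ i, K i * ρ * (K i)ᴴ = ρ) (x u y v : N) :
    ∑ i, K i x u * star (K i y v) = if x = u ∧ y = v then 1 else 0 := by
  have h := congrFun (congrFun (hK (Matrix.single u v 1)) x) y
  rw [Matrix.sum_apply] at h
  have e1 : ∀ i : ι, (K i * Matrix.single u v (1:ℂ) * (K i)ᴴ) x y
      = K i x u * star (K i y v) := by
    intro i
    rw [Matrix.mul_apply]
    have e2 : ∀ q, (K i * Matrix.single u v (1:ℂ)) x q * (K i)ᴴ q y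
        = if q = v then K i x u * star (K i y q) else 0 := by
      intro q
      by_cases hq : q = v
      · subst hq
        rw [Matrix.mul_single_apply_same]
        simp [Matrix.conjTranspose_apply]
      · simp [hq]
    simp only [e2, Finset.sum_ite_eq', Finset.mem_univ, if_true]
  rw [Finset.sum_congr rfl (fun i _ => e1 i)] at h
  rw [h, Matrix.single, Matrix.of_apply]
  by_cases h1 : x = u <;> by_cases h2 : y = v <;> simp [h1, h2] <;> tauto

lemma sum_mul_star_eq_zero {ι : Type*} [Fintype ι] (z : ι → ℂ)
    (h : ∑ i, z i * star (z i) = 0) : ∀ i, z i = 0 := by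
  have h2 : ∑ i, (Complex.normSq (z i) : ℂ) = 0 := by
    simpa [Complex.mul_conj] using h
  have h3 : ∑ i, Complex.normSq (z i) = 0 := by
    have := congrArg Complex.re h2
    simpa [Complex.re_sum] using this
  intro i
  have h4 := (Finset.sum_eq_zero_iff_of_nonneg
    (fun j _ => Complex.normSq_nonneg (z j))).mp h3 i (Finset.mem_univ i)
  exact Complex.normSq_eq_zero.mp h4

lemma kraus_scalar {N ι : Type*} [Fintype N] [DecidableEq N] [Fintype ι]
    (K : ι → Matrix N N ℂ) (hK : ∀ ρ, ∑ i, K i * ρ * (K i)ᴴ = ρ) :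
    ∃ c : ι → ℂ, ∀ i, K i = c i • (1 : Matrix N N ℂ) := by
  cases isEmpty_or_nonempty N with
  | inl hemp =>
    exact ⟨0, fun i => by ext p q; exact hemp.elim p⟩
  | inr hne =>
    obtain ⟨u₀⟩ := hne
    refine ⟨fun i => K i u₀ u₀, fun i => ?_⟩
    ext p q
    rw [Matrix.smul_apply, Matrix.one_apply]
    by_cases hpq : p = q
    · subst hpq
      have hz : ∀ j, K j p p - K j u₀ u₀ = 0 := by
        apply sum_mul_star_eq_zero
        have h1 := kraus_entry K hK p p p p
        have h2 := kraus_entry K hK p p u₀ u₀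
        have h3 := kraus_entry K hK u₀ u₀ p p
        have h4 := kraus_entry K hK u₀ u₀ u₀ u₀
        simp only [if_pos (And.intro rfl rfl)] at h1 h2 h3 h4
        have expand : ∑ j, (K j p p - K j u₀ u₀) * star (K j p p - K j u₀ u₀)
            = (∑ j, K j p p * star (K j p p)) - (∑ j, K j p p * star (K j u₀ u₀))
              - (∑ j, K j u₀ u₀ * star (K j p p))
              + (∑ j, K j u₀ u₀ * star (K j u₀ u₀)) := by
          rw [← Finset.sum_sub_distrib, ← Finset.sum_sub_distrib, ← Finset.sum_add_distrib]
          refine Finset.sum_congr rfl fun j _ => ?_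
          simp only [star_sub]
          ring
        rw [expand, h1, h2, h3, h4]
        ring
      have := hz i
      rw [if_pos rfl, smul_eq_mul, mul_one]
      linear_combination this
    · have hz : ∀ j, K j p q = 0 := by
        apply sum_mul_star_eq_zero
        have h1 := kraus_entry K hK p q p q
        rw [if_neg (fun hc => hpq hc.1)] at h1
        exact h1
      simp [hz i, hpq]

lemma snakeL_apply {h : Type*} [Fintype h] [DecidableEq h]
    (A B : Matrix (h × h) h ℂ) (x y u v : h) :
    snakeL A B (x, y) (u, v) = ∑ p, star (A (u, p) x) * B (p, y) v := by
  unfold snakeL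
  simp [Matrix.mul_apply, Matrix.one_apply, Fintype.sum_prod_type,
    Matrix.conjTranspose_apply, ite_mul, mul_ite, mul_zero, zero_mul,
    Finset.sum_ite_eq, Finset.sum_ite_eq', Equiv.prodAssoc, mul_comm]

/-- The matrix of `w ⊗ id : H ⊗ H → H` (contraction of the first leg by `w`). -/
noncomputable def capL {h : Type*} [DecidableEq h] (w : h → ℂ) : Matrix h (h × h) ℂ :=
  Matrix.of fun x cz => if cz.2 = x then w cz.1 else 0

/-- The matrix of `id ⊗ w : H ⊗ H → H` (contraction of the second leg by `w`). -/
noncomputable def capR {h : Type*} [DecidableEq h] (w : h → ℂ) : Matrix h (h × h) ℂ :=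
  Matrix.of fun x cz => if cz.1 = x then w cz.2 else 0

lemma capL_sandwich {h : Type*} [Fintype h] [DecidableEq h] (w : h → ℂ)
    (M : Matrix (h × h) (h × h) ℂ) (x y : h) :
    (capL w * M * (capL w)ᴴ) x y = ∑ c, ∑ d, w c * M (c, x) (d, y) * star (w d) := by
  rw [sandwich_apply]
  simp [capL, Fintype.sum_prod_type, ite_mul, mul_ite, zero_mul, mul_zero,
    apply_ite (star : ℂ → ℂ), star_zero, Finset.sum_ite_eq, Finset.sum_ite_eq']

lemma capR_sandwich {h : Type*} [Fintype h] [DecidableEq h] (w : h → ℂ)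
    (M : Matrix (h × h) (h × h) ℂ) (x y : h) :
    (capR w * M * (capR w)ᴴ) x y = ∑ c, ∑ d, w c * M (x, c) (y, d) * star (w d) := by
  rw [sandwich_apply]
  simp [capR, Fintype.sum_prod_type, ite_mul, mul_ite, zero_mul, mul_zero,
    apply_ite (star : ℂ → ℂ), star_zero, Finset.sum_ite_eq, Finset.sum_ite_eq']

lemma capL_mul {h : Type*} [Fintype h] [DecidableEq h] (w : h → ℂ)
    (A : Matrix (h × h) h ℂ) (x u : h) :
    (capL w * A) x u = ∑ c, w c * A (c, x) u := by
  simp [capL, Matrix.mul_apply, Fintype.sum_prod_type, ite_mul, zero_mul,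
    Finset.sum_ite_eq, Finset.sum_ite_eq']

lemma capR_mul {h : Type*} [Fintype h] [DecidableEq h] (w : h → ℂ)
    (A : Matrix (h × h) h ℂ) (x u : h) :
    (capR w * A) x u = ∑ c, w c * A (x, c) u := by
  simp [capR, Matrix.mul_apply, Fintype.sum_prod_type, ite_mul, zero_mul,
    Finset.sum_ite_eq, Finset.sum_ite_eq']

/-- Ophidian isometric CP comonoids are pure: if `(Δ, E)` is a CP comonoid on a
finite-dimensional Hilbert space (given by Kraus decompositions) which is
isometric (`Δ† ∘ Δ = id`) and satisfies the snake equations, then both `Δ` and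
`E` are pure, i.e. conjugations by single linear maps `δ : H → H ⊗ H` and
`ε : H → ℂ`. -/
theorem stmt6 {h : Type*} [Fintype h] [DecidableEq h]
    (Δ : Matrix h h ℂ → Matrix (h × h) (h × h) ℂ)
    (E : Matrix h h ℂ → ℂ)
    (m n : ℕ) (D : Fin m → Matrix (h × h) h ℂ) (e : Fin n → h → ℂ)
    (hΔ : ∀ ρ, Δ ρ = ∑ a, D a * ρ * (D a)ᴴ)
    (hE : ∀ ρ, E ρ = ∑ kk, ∑ x, ∑ y, e kk x * ρ x y * star (e kk y))
    (hcoassoc : ∀ ρ : Matrix h h ℂ,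
      ∑ a, ∑ b, coassocL (D a) (D b) * ρ * (coassocL (D a) (D b))ᴴ
        = ∑ a, ∑ b, coassocR (D a) (D b) * ρ * (coassocR (D a) (D b))ᴴ)
    (hcounitL : ∀ ρ : Matrix h h ℂ,
      (Matrix.of fun x y => ∑ kk, ∑ a, ∑ c, ∑ d,
        e kk c * (D a * ρ * (D a)ᴴ) (c, x) (d, y) * star (e kk d)) = ρ)
    (hcounitR : ∀ ρ : Matrix h h ℂ,
      (Matrix.of fun x y => ∑ kk, ∑ a, ∑ c, ∑ d,
        e kk c * (D a * ρ * (D a)ᴴ) (x, c) (y, d) * star (e kk d)) = ρ)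
    (hisometric : ∀ ρ : Matrix h h ℂ,
      ∑ a, ∑ b, (D a)ᴴ * (D b * ρ * (D b)ᴴ) * D a = ρ)
    (hsnakeL : ∀ ρ : Matrix (h × h) (h × h) ℂ,
      ∑ a, ∑ b, snakeL (D a) (D b) * ρ * (snakeL (D a) (D b))ᴴ = ρ)
    (hsnakeR : ∀ ρ : Matrix (h × h) (h × h) ℂ,
      ∑ a, ∑ b, snakeR (D a) (D b) * ρ * (snakeR (D a) (D b))ᴴ = ρ) :
    (∃ δ : Matrix (h × h) h ℂ, ∀ ρ, Δ ρ = δ * ρ * δᴴ) ∧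
    (∃ ε : h → ℂ, ∀ ρ, E ρ = ∑ x, ∑ y, ε x * ρ x y * star (ε y)) := by
  classical
  cases isEmpty_or_nonempty h with
  | inl hemp =>
    constructor
    · exact ⟨0, fun ρ => by ext p q; exact hemp.elim p.1⟩
    · exact ⟨0, fun ρ => by simp [hE]⟩
  | inr hne =>
    obtain ⟨x₀⟩ := hne
    -- the counit-left family is a Kraus family for the identity
    have hFK : ∀ ρ : Matrix h h ℂ,
        ∑ i : Fin n × Fin m, (capL (e i.1) * D i.2) * ρ * (capL (e i.1) * D i.2)ᴴ = ρ := by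
      intro ρ
      have e1 : ∀ i : Fin n × Fin m, (capL (e i.1) * D i.2) * ρ * (capL (e i.1) * D i.2)ᴴ
          = capL (e i.1) * (D i.2 * ρ * (D i.2)ᴴ) * (capL (e i.1))ᴴ := by
        intro i
        simp only [Matrix.conjTranspose_mul, Matrix.mul_assoc]
      rw [Finset.sum_congr rfl fun i _ => e1 i]
      ext x y
      rw [Matrix.sum_apply, Fintype.sum_prod_type]
      have hcl := congrFun (congrFun (hcounitL ρ) x) y
      rw [Matrix.of_apply] at hcl
      rw [← hcl]
      exact Finset.sum_congr rfl fun k _ => Finset.sum_congr rfl fun a _ =>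
        capL_sandwich (e k) _ x y
    have hGK : ∀ ρ : Matrix h h ℂ,
        ∑ i : Fin n × Fin m, (capR (e i.1) * D i.2) * ρ * (capR (e i.1) * D i.2)ᴴ = ρ := by
      intro ρ
      have e1 : ∀ i : Fin n × Fin m, (capR (e i.1) * D i.2) * ρ * (capR (e i.1) * D i.2)ᴴ
          = capR (e i.1) * (D i.2 * ρ * (D i.2)ᴴ) * (capR (e i.1))ᴴ := by
        intro i
        simp only [Matrix.conjTranspose_mul, Matrix.mul_assoc]
      rw [Finset.sum_congr rfl fun i _ => e1 i]
      ext x y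
      rw [Matrix.sum_apply, Fintype.sum_prod_type]
      have hcl := congrFun (congrFun (hcounitR ρ) x) y
      rw [Matrix.of_apply] at hcl
      rw [← hcl]
      exact Finset.sum_congr rfl fun k _ => Finset.sum_congr rfl fun a _ =>
        capR_sandwich (e k) _ x y
    have hSK : ∀ ρ : Matrix (h × h) (h × h) ℂ,
        ∑ i : Fin m × Fin m, snakeL (D i.1) (D i.2) * ρ * (snakeL (D i.1) (D i.2))ᴴ = ρ := by
      intro ρ
      rw [Fintype.sum_prod_type]
      exact hsnakeL ρ
    obtain ⟨f, hf⟩ := kraus_scalar _ hFK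
    obtain ⟨g, hg⟩ := kraus_scalar _ hGK
    obtain ⟨sc, hsc⟩ := kraus_scalar _ hSK
    -- entrywise versions
    have hFe : ∀ (k : Fin n) (a : Fin m) (x u : h),
        ∑ c, e k c * D a (c, x) u = if x = u then f (k, a) else 0 := by
      intro k a x u
      have h1 := congrFun (congrFun (hf (k, a)) x) u
      rw [capL_mul] at h1
      rw [h1, Matrix.smul_apply, Matrix.one_apply, smul_eq_mul]
      by_cases hxu : x = u <;> simp [hxu]
    have hGe : ∀ (k : Fin n) (a : Fin m) (x u : h),
        ∑ c, e k c * D a (x, c) u = if x = u then g (k, a) else 0 := by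
      intro k a x u
      have h1 := congrFun (congrFun (hg (k, a)) x) u
      rw [capR_mul] at h1
      rw [h1, Matrix.smul_apply, Matrix.one_apply, smul_eq_mul]
      by_cases hxu : x = u <;> simp [hxu]
    have hSe : ∀ (a b : Fin m) (x y u v : h),
        ∑ p, star (D a (u, p) x) * D b (p, y) v
          = if x = u ∧ y = v then sc (a, b) else 0 := by
      intro a b x y u v
      have h1 := congrFun (congrFun (hsc (a, b)) (x, y)) (u, v)
      rw [snakeL_apply] at h1
      rw [h1, Matrix.smul_apply, Matrix.one_apply, smul_eq_mul]
      by_cases hx : x = u <;> by_cases hy : y = v <;>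
        simp [Prod.ext_iff, hx, hy]
    -- some f is nonzero
    have hfex : ∃ i₀ : Fin n × Fin m, f i₀ ≠ 0 := by
      by_contra hall
      push_neg at hall
      have h1 := hFK 1
      have e0 : ∀ i : Fin n × Fin m,
          (capL (e i.1) * D i.2) * (1 : Matrix h h ℂ) * (capL (e i.1) * D i.2)ᴴ = 0 := by
        intro i
        rw [hf i, hall i, zero_smul]
        simp
      rw [Finset.sum_congr rfl fun i _ => e0 i, Finset.sum_const, smul_zero] at h1
      have := congrFun (congrFun h1 x₀) x₀
      simp at this
    obtain ⟨⟨k₀, a₀⟩, hf0⟩ := hfex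
    have hfs0 : star (f (k₀, a₀)) ≠ 0 := star_ne_zero.mpr hf0
    -- key identity: all Kraus operators of Δ are proportional to δ₀
    have key : ∀ (b : Fin m) (x y v : h),
        star (f (k₀, a₀)) * D b (x, y) v
          = if y = v then sc (a₀, b) * star (e k₀ x) else 0 := by
      intro b x y v
      have lhs1 : ∑ u, star (e k₀ u) * (∑ p, star (D a₀ (u, p) x) * D b (p, y) v)
          = star (f (k₀, a₀)) * D b (x, y) v := by
        calc ∑ u, star (e k₀ u) * (∑ p, star (D a₀ (u, p) x) * D b (p, y) v)
            = ∑ p, (∑ u, star (e k₀ u * D a₀ (u, p) x)) * D b (p, y) v := by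
              simp only [Finset.mul_sum]
              rw [Finset.sum_comm]
              refine Finset.sum_congr rfl fun p _ => ?_
              rw [Finset.sum_mul]
              refine Finset.sum_congr rfl fun u _ => ?_
              rw [star_mul']
              ring
          _ = ∑ p, star (∑ u, e k₀ u * D a₀ (u, p) x) * D b (p, y) v := by
              simp [star_sum]
          _ = ∑ p, star (if p = x then f (k₀, a₀) else 0) * D b (p, y) v := by
              refine Finset.sum_congr rfl fun p _ => ?_
              rw [hFe k₀ a₀ p x]
          _ = star (f (k₀, a₀)) * D b (x, y) v := by
              simp [apply_ite (star : ℂ → ℂ), ite_mul, zero_mul,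
                Finset.sum_ite_eq, Finset.sum_ite_eq']
      have lhs2 : ∑ u, star (e k₀ u) * (∑ p, star (D a₀ (u, p) x) * D b (p, y) v)
          = if y = v then sc (a₀, b) * star (e k₀ x) else 0 := by
        have h2 : ∀ u, (∑ p, star (D a₀ (u, p) x) * D b (p, y) v)
            = if x = u ∧ y = v then sc (a₀, b) else 0 := fun u => hSe a₀ b x y u v
        simp only [h2, mul_ite, mul_zero]
        by_cases hyv : y = v
        · subst hyv
          simp [Finset.sum_ite_eq, mul_comm]
        · simp [hyv]
      rw [← lhs1, lhs2]
    set δ₀ : Matrix (h × h) h ℂ :=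
      Matrix.of fun p v => star (e k₀ p.1) * (if p.2 = v then 1 else 0) with hδ₀
    set μ : Fin m → ℂ := fun b => sc (a₀, b) / star (f (k₀, a₀)) with hμ
    have hD : ∀ b, D b = μ b • δ₀ := by
      intro b
      ext ⟨x, y⟩ v
      simp only [hδ₀, Matrix.smul_apply, Matrix.of_apply]
      have hk := key b x y v
      by_cases hyv : y = v
      · rw [if_pos hyv] at hk
        rw [if_pos hyv, mul_one, smul_eq_mul]
        simp only [hμ]
        rw [div_mul_eq_mul_div, eq_div_iff hfs0]
        linear_combination hk
      · rw [if_neg hyv] at hk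
        rw [if_neg hyv, mul_zero, smul_zero]
        exact (mul_eq_zero.mp hk).resolve_left hfs0
    -- purity of Δ
    have hr : (0:ℝ) ≤ ∑ b, Complex.normSq (μ b) :=
      Finset.sum_nonneg fun b _ => Complex.normSq_nonneg (μ b)
    have hΔpure : ∃ δ : Matrix (h × h) h ℂ, ∀ ρ, Δ ρ = δ * ρ * δᴴ := by
      refine ⟨((Real.sqrt (∑ b, Complex.normSq (μ b)) : ℝ) : ℂ) • δ₀, fun ρ => ?_⟩
      rw [hΔ]
      have e1 : ∀ b : Fin m, D b * ρ * (D b)ᴴ = (μ b * star (μ b)) • (δ₀ * ρ * δ₀ᴴ) := by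
        intro b
        rw [hD b, Matrix.conjTranspose_smul, Matrix.smul_mul, Matrix.smul_mul,
          Matrix.mul_smul, smul_smul]
      rw [Finset.sum_congr rfl fun b _ => e1 b, ← Finset.sum_smul]
      rw [Matrix.conjTranspose_smul, Matrix.smul_mul, Matrix.smul_mul,
        Matrix.mul_smul, smul_smul]
      congr 1
      have : ∑ b, μ b * star (μ b) = ((∑ b, Complex.normSq (μ b) : ℝ) : ℂ) := by
        push_cast
        exact Finset.sum_congr rfl fun b _ => Complex.mul_conj (μ b)
      rw [this, Complex.star_def, Complex.conj_ofReal, ← Complex.ofReal_mul,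
        Real.mul_self_sqrt hr]
    -- now the counit part
    have hex : ∃ x₁, e k₀ x₁ ≠ 0 := by
      by_contra hc
      push_neg at hc
      apply hf0
      have h1 := hFe k₀ a₀ x₀ x₀
      rw [if_pos rfl] at h1
      rw [← h1]
      exact Finset.sum_eq_zero fun c _ => by rw [hc c, zero_mul]
    obtain ⟨x₁, hx₁⟩ := hex
    have hμ0 : μ a₀ ≠ 0 := by
      intro hm
      apply hf0
      have hD0 : D a₀ = 0 := by rw [hD a₀, hm, zero_smul]
      have h1 := hFe k₀ a₀ x₀ x₀
      rw [if_pos rfl] at h1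
      rw [← h1, hD0]
      exact Finset.sum_eq_zero fun c _ => by simp
    have hC0 : μ a₀ * star (e k₀ x₁) ≠ 0 := mul_ne_zero hμ0 (star_ne_zero.mpr hx₁)
    have hkey2 : ∀ (k : Fin n) (x u : h),
        e k u * (μ a₀ * star (e k₀ x)) = if x = u then g (k, a₀) else 0 := by
      intro k x u
      have h1 := hGe k a₀ x u
      rw [← h1, hD a₀]
      simp only [hδ₀, Matrix.smul_apply, Matrix.of_apply, smul_eq_mul]
      have h2 : ∀ c, e k c * (μ a₀ * (star (e k₀ x) * if c = u then 1 else 0))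
          = if c = u then e k c * (μ a₀ * star (e k₀ x)) else 0 := by
        intro c; by_cases hcu : c = u <;> simp [hcu]
      rw [Finset.sum_congr rfl fun c _ => h2 c,
        Finset.sum_ite_eq' Finset.univ u, if_pos (Finset.mem_univ u)]
    set ν : Fin n → ℂ := fun k => g (k, a₀) / (μ a₀ * star (e k₀ x₁)) with hν
    have he : ∀ k u, e k u = if u = x₁ then ν k else 0 := by
      intro k u
      have h1 := hkey2 k x₁ u
      by_cases hu : u = x₁
      · subst hu
        rw [if_pos rfl] at h1 ⊢
        simp only [hν]
        rw [eq_div_iff hC0]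
        linear_combination h1
      · rw [if_neg (fun hh => hu hh.symm)] at h1
        rw [if_neg hu]
        exact (mul_eq_zero.mp h1).resolve_right hC0
    have hr' : (0:ℝ) ≤ ∑ k, Complex.normSq (ν k) :=
      Finset.sum_nonneg fun k _ => Complex.normSq_nonneg _
    refine ⟨hΔpure, ⟨fun u =>
      ((Real.sqrt (∑ k, Complex.normSq (ν k)) : ℝ) : ℂ) * (if u = x₁ then 1 else 0),
      fun ρ => ?_⟩⟩
    rw [hE]
    have hsum : ∑ k, ν k * star (ν k) = ((∑ k, Complex.normSq (ν k) : ℝ) : ℂ) := by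
      push_cast
      exact Finset.sum_congr rfl fun k _ => Complex.mul_conj (ν k)
    calc ∑ k, ∑ x, ∑ y, e k x * ρ x y * star (e k y)
        = ∑ k, ν k * ρ x₁ x₁ * star (ν k) := by
          refine Finset.sum_congr rfl fun k _ => ?_
          simp [he, ite_mul, zero_mul, mul_ite, mul_zero,
            apply_ite (star : ℂ → ℂ), star_zero, Finset.sum_ite_eq, Finset.sum_ite_eq']
      _ = (∑ k, ν k * star (ν k)) * ρ x₁ x₁ := by
          rw [Finset.sum_mul]
          exact Finset.sum_congr rfl fun k _ => by ring
      _ = ∑ x, ∑ y, (((Real.sqrt (∑ k, Complex.normSq (ν k)) : ℝ) : ℂ) * (if x = x₁ then 1 else 0))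
            * ρ x y
            * star (((Real.sqrt (∑ k, Complex.normSq (ν k)) : ℝ) : ℂ) * (if y = x₁ then 1 else 0)) := by
          rw [hsum]
          have collapse : ∑ x, ∑ y,
              (((Real.sqrt (∑ k, Complex.normSq (ν k)) : ℝ) : ℂ) * (if x = x₁ then 1 else 0))
              * ρ x y
              * star (((Real.sqrt (∑ k, Complex.normSq (ν k)) : ℝ) : ℂ) * (if y = x₁ then 1 else 0))
              = (((Real.sqrt (∑ k, Complex.normSq (ν k)) : ℝ) : ℂ)
                * star ((Real.sqrt (∑ k, Complex.normSq (ν k)) : ℝ) : ℂ)) * ρ x₁ x₁ := by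
            simp only [mul_ite, mul_one, mul_zero, ite_mul, zero_mul,
              apply_ite (star : ℂ → ℂ), star_zero]
            rw [Finset.sum_congr rfl fun x _ => Finset.sum_ite_eq' Finset.univ x₁
              (fun y => _)]
            simp [Finset.sum_ite_eq', mul_comm, mul_assoc, mul_left_comm]
          rw [collapse, Complex.star_def, Complex.conj_ofReal, ← Complex.ofReal_mul,
            Real.mul_self_sqrt hr']
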